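/- Every connected {K₃, false-twin}-free graph on n ≥ 4 vertices has at least ⌈n/2⌉ bicliques. -/

import Mathlib

/-- A set of vertices inducing a complete bipartite subgraph (both sides nonempty). -/
def IsCompleteBipartiteSet {V : Type*} (G : SimpleGraph V) (B : Set V) : Prop :=
  ∃ X Y : Set V, X.Nonempty ∧ Y.Nonempty ∧ Disjoint X Y ∧ B = X ∪ Y ∧
    (∀ x ∈ X, ∀ y ∈ Y, G.Adj x y) ∧
    (∀ x ∈ X, ∀ x' ∈ X, ¬ G.Adj x x') ∧
    (∀ y ∈ Y, ∀ y' ∈ Y, ¬ G.Adj y y')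

/-- A biclique: a maximal set of vertices inducing a complete bipartite subgraph. -/
def IsBiclique {V : Type*} (G : SimpleGraph V) (B : Set V) : Prop :=
  IsCompleteBipartiteSet G B ∧
    ∀ B' : Set V, IsCompleteBipartiteSet G B' → B ⊆ B' → B' = B

/-- A vertex set that is a star: a center `c` adjacent to all other vertices of the set,
which are nonempty and pairwise non-adjacent (shape `K_{1,r}`, `r ≥ 1`). -/
def IsStarSet {V : Type*} (G : SimpleGraph V) (B : Set V) : Prop :=
  ∃ c ∈ B, (B \ {c}).Nonempty ∧ (∀ w ∈ B, w ≠ c → G.Adj c w) ∧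
    (∀ w ∈ B, ∀ z ∈ B, w ≠ c → z ≠ c → ¬ G.Adj w z)

/-- A graph is false-twin-free if no two distinct vertices have equal open neighborhoods. -/
def FalseTwinFree {V : Type*} (G : SimpleGraph V) : Prop :=
  ∀ u v : V, G.neighborSet u = G.neighborSet v → u = v

/-- The closed star of a vertex with at least one neighbor is a complete bipartite set
in a triangle-free graph. -/
lemma star_isCBS {V : Type*} (G : SimpleGraph V) (hK3 : G.CliqueFree 3) (v : V)
    (hne : (G.neighborSet v).Nonempty) :
    IsCompleteBipartiteSet G ({v} ∪ G.neighborSet v) := by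
  classical
  refine ⟨{v}, G.neighborSet v, ⟨v, rfl⟩, hne, ?_, rfl, ?_, ?_, ?_⟩
  · rw [Set.disjoint_singleton_left]
    exact fun h => G.irrefl h
  · rintro x rfl y hy; exact hy
  · rintro x rfl x' rfl; exact fun h => G.irrefl h
  · intro y hy y' hy' hadj
    exact hK3 {v, y, y'} (SimpleGraph.is3Clique_triple_iff.mpr ⟨hy, hy', hadj⟩)

/-- Every complete bipartite set extends to a biclique. -/
lemma exists_biclique_ext {V : Type*} [Fintype V] (G : SimpleGraph V) {B : Set V}
    (hB : IsCompleteBipartiteSet G B) : ∃ C, IsBiclique G C ∧ B ⊆ C := by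
  classical
  have hfin : {C : Set V | IsCompleteBipartiteSet G C ∧ B ⊆ C}.Finite := Set.toFinite _
  obtain ⟨C, hC, hmax⟩ : ∃ C ∈ {C : Set V | IsCompleteBipartiteSet G C ∧ B ⊆ C},
      ∀ C' ∈ {C : Set V | IsCompleteBipartiteSet G C ∧ B ⊆ C},
        C.ncard ≤ C'.ncard → C.ncard = C'.ncard := by
    obtain ⟨C, hC, h⟩ := Set.exists_max_image _ Set.ncard hfin ⟨B, hB, subset_rfl⟩
    exact ⟨C, hC, fun C' hC' hle => le_antisymm hle (h C' hC')⟩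
  refine ⟨C, ⟨hC.1, ?_⟩, hC.2⟩
  intro C' hC' hsub
  have hmem : C' ∈ {C : Set V | IsCompleteBipartiteSet G C ∧ B ⊆ C} :=
    ⟨hC', hC.2.trans hsub⟩
  have hle : C.ncard ≤ C'.ncard := Set.ncard_le_ncard hsub (Set.toFinite _)
  have heq := hmax C' hmem hle
  exact (Set.eq_of_subset_of_ncard_le hsub heq.ge (Set.toFinite _)).symm

/-- In a biclique containing a vertex together with all its neighbors, the side
opposite to the vertex is exactly its neighborhood. -/
lemma side_eq {V : Type*} (G : SimpleGraph V) {B X Y : Set V} {v : V}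
    (hXY : B = X ∪ Y) (hadj : ∀ x ∈ X, ∀ y ∈ Y, G.Adj x y)
    (hX : ∀ x ∈ X, ∀ x' ∈ X, ¬ G.Adj x x')
    (hvX : v ∈ X) (hNB : G.neighborSet v ⊆ B) : Y = G.neighborSet v := by
  ext y
  constructor
  · intro hy; exact hadj v hvX y hy
  · intro hy
    have hmem : y ∈ X ∪ Y := by rw [← hXY]; exact hNB hy
    rcases hmem with h | h
    · exact absurd hy (hX v hvX y h)
    · exact h

/-- Every connected {K₃, false-twin}-free graph on n ≥ 4 vertices has at least
⌈n/2⌉ bicliques. -/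
theorem bicliques_lower_bound_K3_free {V : Type*} [Fintype V] (G : SimpleGraph V)
    (hconn : G.Connected) (hn : 4 ≤ Fintype.card V)
    (hK3 : G.CliqueFree 3) (htf : FalseTwinFree G) :
    (Fintype.card V + 1) / 2 ≤ {B : Set V | IsBiclique G B}.ncard := by
  classical
  -- every vertex has a neighbor
  have hdeg : ∀ v : V, (G.neighborSet v).Nonempty := by
    intro v
    have h1 : 1 < Fintype.card V := by omega
    obtain ⟨u, hu⟩ := Fintype.exists_ne_of_one_lt_card h1 v
    obtain ⟨w⟩ := hconn.preconnected v u
    exact ⟨w.snd, SimpleGraph.Walk.adj_snd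
      (SimpleGraph.Walk.not_nil_of_ne (Ne.symm hu))⟩
  have hstar : ∀ v : V, ∃ C, IsBiclique G C ∧ ({v} ∪ G.neighborSet v : Set V) ⊆ C :=
    fun v => exists_biclique_ext G (star_isCBS G hK3 v (hdeg v))
  choose f hf1 hf2 using hstar
  have hmemf : ∀ v : V, v ∈ f v := fun v => hf2 v (Or.inl rfl)
  have hNf : ∀ v : V, G.neighborSet v ⊆ f v := fun v y hy => hf2 v (Or.inr hy)
  -- each biclique is the image of at most two vertices
  have hfiber : ∀ a ∈ Finset.univ.image f,
      (Finset.univ.filter fun x => f x = a).card ≤ 2 := by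
    intro a ha
    obtain ⟨v0, _, hv0⟩ := Finset.mem_image.mp ha
    subst hv0
    obtain ⟨X, Y, hXne, hYne, hdisj, hunion, hadj, hXi, hYi⟩ := (hf1 v0).1
    have key : ∀ u : V, f u = f v0 →
        (u ∈ X ∧ Y = G.neighborSet u) ∨ (u ∈ Y ∧ X = G.neighborSet u) := by
      intro u hu
      have humem : u ∈ X ∪ Y := by rw [← hunion, ← hu]; exact hmemf u
      have hNu : G.neighborSet u ⊆ f v0 := hu ▸ hNf u
      rcases humem with h | h
      · exact Or.inl ⟨h, side_eq G hunion hadj hXi h hNu⟩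
      · refine Or.inr ⟨h, side_eq G (by rw [hunion, Set.union_comm])
          (fun y hy x hx => (hadj x hx y hy).symm) hYi h hNu⟩
    have hinj : Set.InjOn (fun x => if x ∈ X then true else false)
        ↑(Finset.univ.filter fun x => f x = f v0) := by
      intro u hu v hv huv
      simp only [Finset.coe_filter, Set.mem_setOf_eq, Finset.mem_univ, true_and] at hu hv
      rcases key u hu with ⟨hux, hYu⟩ | ⟨huy, hXu⟩ <;>
        rcases key v hv with ⟨hvx, hYv⟩ | ⟨hvy, hXv⟩
      · exact htf u v (hYu ▸ hYv)
      · have hvnX : v ∉ X := fun h => Set.disjoint_left.mp hdisj h hvy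
        simp [hux, hvnX] at huv
      · have hunX : u ∉ X := fun h => Set.disjoint_left.mp hdisj h huy
        simp [hunX, hvx] at huv
      · exact htf u v (hXu ▸ hXv)
    calc (Finset.univ.filter fun x => f x = f v0).card
        ≤ (Finset.univ : Finset Bool).card :=
          Finset.card_le_card_of_injOn _ (fun _ _ => Finset.mem_univ _) hinj
      _ = 2 := rfl
  have hcardV : Fintype.card V ≤ 2 * (Finset.univ.image f).card := by
    have := Finset.card_le_mul_card_image (f := f) Finset.univ 2 hfiber
    simpa using this
  have himg : (Finset.univ.image f).card ≤ {B : Set V | IsBiclique G B}.ncard := by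
    rw [← Set.ncard_coe_finset]
    refine Set.ncard_le_ncard ?_ (Set.toFinite _)
    intro a ha
    obtain ⟨v, _, rfl⟩ := Finset.mem_image.mp (by exact_mod_cast ha)
    exact hf1 v
  omega
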